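/- When the relation on values is equality, mutual simulation of communication trees implies equality: if u ⊑₌ w and w ⊑₌ u then u = w. -/

import Mathlib

/-! Coinductive communication trees, realized as the M-type of a polynomial
functor, together with the coinductively defined simulation relation. -/

/-- Shapes of nodes of communication trees. -/
inductive CommShape (V L : Type) : Type where
  | bot : CommShape V L
  | close : CommShape V L
  | label (k : L) : CommShape V L
  | pair : CommShape V L
  | val (f : V) : CommShape V L

/-- Arities: `bot` and `close` have no children, `label` and `val` have one,
`pair` has two. -/
def commArity (V L : Type) : CommShape V L → Type
  | .bot => Empty
  | .close => Empty
  | .label _ => Unit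
  | .pair => Bool
  | .val _ => Unit

/-- The polynomial functor of communication trees. -/
def CommP (V L : Type) : PFunctor := ⟨CommShape V L, commArity V L⟩

/-- The coinductive type of (possibly infinite) communication trees. -/
def Comm (V L : Type) : Type := (CommP V L).M

namespace Comm

variable {V L : Type}

/-- The empty communication. -/
def bot : Comm V L := PFunctor.M.mk ⟨CommShape.bot, Empty.elim⟩

/-- The close message. -/
def close : Comm V L := PFunctor.M.mk ⟨CommShape.close, Empty.elim⟩

/-- A label followed by a continuation. -/
def label (k : L) (v : Comm V L) : Comm V L :=
  PFunctor.M.mk ⟨CommShape.label k, fun _ => v⟩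

/-- A pair of communications (channel transmission). -/
def pair (v v' : Comm V L) : Comm V L :=
  PFunctor.M.mk ⟨CommShape.pair, fun b : Bool => if b then v else v'⟩

/-- A functional value followed by a continuation. -/
def val (f : V) (v : Comm V L) : Comm V L :=
  PFunctor.M.mk ⟨CommShape.val f, fun _ => v⟩

/-- One unfolding of the simulation relation: the clauses defining simulation. -/
def SimStep (R : V → V → Prop) (S : Comm V L → Comm V L → Prop)
    (u w : Comm V L) : Prop :=
  u = Comm.bot ∨
  (u = Comm.close ∧ w = Comm.close) ∨
  (∃ k v v', u = Comm.label k v ∧ w = Comm.label k v' ∧ S v v') ∨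
  (∃ a b a' b', u = Comm.pair a b ∧ w = Comm.pair a' b' ∧ S a a' ∧ S b b') ∨
  (∃ f g v v', u = Comm.val f v ∧ w = Comm.val g v' ∧ R f g ∧ S v v')

/-- Simulation modulo `R`: the largest relation closed under the clauses of
`SimStep`, i.e. the union of all post-fixed points. -/
def Sim (R : V → V → Prop) (u w : Comm V L) : Prop :=
  ∃ S : Comm V L → Comm V L → Prop, (∀ a b, S a b → SimStep R S a b) ∧ S u w

/-- The height-`n` truncation of a communication tree. -/
def trunc : ℕ → Comm V L → Comm V L
  | 0, _ => Comm.bot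
  | n + 1, w =>
    match PFunctor.M.dest w with
    | ⟨CommShape.bot, _⟩ => Comm.bot
    | ⟨CommShape.close, _⟩ => Comm.close
    | ⟨CommShape.label k, f⟩ => Comm.label k (trunc n (f ()))
    | ⟨CommShape.pair, f⟩ => Comm.pair (trunc n (f true)) (trunc n (f false))
    | ⟨CommShape.val g, f⟩ => Comm.val g (trunc n (f ()))

end Comm

namespace Comm

variable {V L : Type}

/-- The shape at the root of a communication tree. -/
def head (c : Comm V L) : CommShape V L := (PFunctor.M.dest c).1

lemma sim_step {R : V → V → Prop} {u w : Comm V L} (h : Sim R u w) :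
    SimStep R (Sim R) u w := by
  obtain ⟨S, hS, huw⟩ := h
  rcases hS _ _ huw with h | h | ⟨k, v, v', h₁, h₂, h₃⟩ | ⟨a, b, a', b', h₁, h₂, h₃, h₄⟩ |
    ⟨f, g, v, v', h₁, h₂, h₃, h₄⟩
  · exact Or.inl h
  · exact Or.inr (Or.inl h)
  · exact Or.inr (Or.inr (Or.inl ⟨k, v, v', h₁, h₂, S, hS, h₃⟩))
  · exact Or.inr (Or.inr (Or.inr (Or.inl ⟨a, b, a', b', h₁, h₂, ⟨S, hS, h₃⟩, ⟨S, hS, h₄⟩⟩)))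
  · exact Or.inr (Or.inr (Or.inr (Or.inr ⟨f, g, v, v', h₁, h₂, h₃, ⟨S, hS, h₄⟩⟩)))

lemma label_inj {k k' : L} {v v' : Comm V L} (h : label k v = label k' v') :
    k = k' ∧ v = v' := by
  have h2 := PFunctor.M.mk_inj h
  obtain ⟨h3, h4⟩ := Sigma.ext_iff.mp h2
  have hk : k = k' := by injection h3
  subst hk
  exact ⟨rfl, congrFun (eq_of_heq h4) ()⟩

lemma pair_inj {a b a' b' : Comm V L} (h : pair a b = pair a' b') :
    a = a' ∧ b = b' := by
  have h2 := PFunctor.M.mk_inj h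
  obtain ⟨-, h4⟩ := Sigma.ext_iff.mp h2
  have h5 := eq_of_heq h4
  exact ⟨congrFun h5 true, congrFun h5 false⟩

lemma val_inj {f f' : V} {v v' : Comm V L} (h : val f v = val f' v') :
    f = f' ∧ v = v' := by
  have h2 := PFunctor.M.mk_inj h
  obtain ⟨h3, h4⟩ := Sigma.ext_iff.mp h2
  have hf : f = f' := by injection h3
  subst hf
  exact ⟨rfl, congrFun (eq_of_heq h4) ()⟩

end Comm

/-- When the relation on values is equality, mutual simulation implies
equality of communication trees. -/
theorem stmt_14 {V L : Type} (u w : Comm V L)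
    (h1 : Comm.Sim (fun f g : V => f = g) u w)
    (h2 : Comm.Sim (fun f g : V => f = g) w u) :
    u = w := by
  apply PFunctor.M.bisim
    (fun x y => Comm.Sim (fun f g : V => f = g) x y ∧ Comm.Sim (fun f g : V => f = g) y x)
  · rintro x y ⟨hxy, hyx⟩
    have s1 := Comm.sim_step hxy
    have s2 := Comm.sim_step hyx
    rcases s1 with h | ⟨h, h'⟩ | ⟨k, v, v', h, h', hs⟩ | ⟨a, b, a', b', h, h', hs1, hs2⟩ |
      ⟨f, g, v, v', h, h', hfg, hs⟩ <;>
    rcases s2 with g1 | ⟨g1, g1'⟩ | ⟨k2, v2, v2', g1, g1', gs⟩ |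
      ⟨a2, b2, a2', b2', g1, g1', gs1, gs2⟩ | ⟨f2, g2, w2, w2', g1, g1', gfg, gs⟩ <;>
    subst h <;>
    first
    | exact CommShape.noConfusion rfl rfl (heq_of_eq (congrArg Comm.head g1'))
    | exact CommShape.noConfusion rfl rfl (heq_of_eq (congrArg Comm.head (h'.symm.trans g1)))
    | skip
    -- bot / bot
    · subst g1
      exact ⟨CommShape.bot, Empty.elim, Empty.elim, rfl, rfl, fun i => i.elim⟩
    -- close / close
    · subst h'
      exact ⟨CommShape.close, Empty.elim, Empty.elim, rfl, rfl, fun i => i.elim⟩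
    -- label / label
    · obtain ⟨rfl, rfl⟩ := Comm.label_inj g1'
      obtain ⟨-, rfl⟩ := Comm.label_inj (h'.symm.trans g1)
      subst h'
      exact ⟨CommShape.label k, fun _ => v, fun _ => v', rfl, rfl, fun _ => ⟨hs, gs⟩⟩
    -- pair / pair
    · obtain ⟨rfl, rfl⟩ := Comm.pair_inj g1'
      obtain ⟨rfl, rfl⟩ := Comm.pair_inj (h'.symm.trans g1)
      subst h'
      refine ⟨CommShape.pair, (fun i : Bool => if i then a else b),
        (fun i : Bool => if i then a' else b'), rfl, rfl, ?_⟩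
      rintro (_ | _)
      · exact ⟨hs2, gs2⟩
      · exact ⟨hs1, gs1⟩
    -- val / val
    · subst hfg
      obtain ⟨rfl, rfl⟩ := Comm.val_inj g1'
      obtain ⟨-, rfl⟩ := Comm.val_inj (h'.symm.trans g1)
      subst h'
      exact ⟨CommShape.val f, fun _ => v, fun _ => v', rfl, rfl, fun _ => ⟨hs, gs⟩⟩
  · exact ⟨h1, h2⟩
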